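/- Let (σ_1,…,σ_n) be a uniformly random permutation of the multiset with n/2 copies of +1 and n/2 copies of −1 (n even), and let s_i = ∑_{p=1}^i σ_p. Then for any i ≤ n, E[|s_i|] satisfies the recursion E[|s_i|] = E[|s_{i−1}|]·(1 − 1/(n−i+1)) + P(s_{i−1} = 0). -/

import Mathlib

open Finset

-- count of p : Fin n with val < j
lemma card_filter_lt_fin (n j : ℕ) (h : j ≤ n) :
    ((univ : Finset (Fin n)).filter (fun p : Fin n => (p : ℕ) < j)).card = j := by
  induction j with
  | zero => simp
  | succ k ih =>
    have hk : k ≤ n := Nat.le_of_succ_le h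
    have hkn : k < n := h
    have : (univ : Finset (Fin n)).filter (fun p : Fin n => (p : ℕ) < k + 1)
        = insert ⟨k, hkn⟩ ((univ : Finset (Fin n)).filter (fun p : Fin n => (p : ℕ) < k)) := by
      ext p
      simp only [mem_filter, mem_univ, true_and, mem_insert, Fin.ext_iff]
      omega
    rw [this, card_insert_of_notMem (by simp), ih hk]

-- sum of ±1 over a finset
lemma sum_pm {n : ℕ} (A : Finset (Fin n)) (σ : Fin n → Bool) :
    ∑ p ∈ A, (if σ p then (1 : ℝ) else -1)
      = ((A.filter (fun p => σ p = true)).card : ℝ)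
        - ((A.filter (fun p => ¬(σ p = true))).card : ℝ) := by
  rw [← Finset.sum_filter_add_sum_filter_not A (fun p => σ p = true)]
  rw [Finset.sum_congr rfl (fun p hp => if_pos (mem_filter.mp hp).2),
      Finset.sum_congr rfl (g := fun _ => (-1 : ℝ)) (fun p hp => if_neg (mem_filter.mp hp).2)]
  simp [sub_eq_add_neg]


def Sset (n : ℕ) : Finset (Fin n → Bool) :=
  univ.filter (fun σ => (univ.filter (fun p => σ p = true)).card = n / 2)

noncomputable def sfun (n j : ℕ) (σ : Fin n → Bool) : ℝ :=
  ∑ p ∈ univ.filter (fun p : Fin n => (p : ℕ) < j), (if σ p then (1 : ℝ) else -1)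

lemma mem_Sset_comp {n : ℕ} (σ : Fin n → Bool) (e : Equiv.Perm (Fin n)) :
    (σ ∘ e) ∈ Sset n ↔ σ ∈ Sset n := by
  simp only [Sset, mem_filter, mem_univ, true_and, Function.comp]
  have : (univ : Finset (Fin n)).filter (fun p => σ (e p) = true)
      = ((univ : Finset (Fin n)).filter (fun p => σ p = true)).map e.symm.toEmbedding := by
    ext q
    simp only [mem_map, mem_filter, mem_univ, true_and, Equiv.coe_toEmbedding]
    constructor
    · intro h; exact ⟨e q, h, e.symm_apply_apply q⟩
    · rintro ⟨p, hp, hq⟩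
      rwa [show p = e q from by rw [← hq, Equiv.apply_symm_apply]] at hp
  rw [this, card_map]

lemma sfun_step {n i : ℕ} (hi1 : 1 ≤ i) (hi : i ≤ n) (σ : Fin n → Bool) :
    sfun n i σ = sfun n (i - 1) σ + (if σ ⟨i - 1, by omega⟩ then (1 : ℝ) else -1) := by
  have hins : (univ : Finset (Fin n)).filter (fun p : Fin n => (p : ℕ) < i)
      = insert ⟨i - 1, by omega⟩ ((univ : Finset (Fin n)).filter (fun p : Fin n => (p : ℕ) < i - 1)) := by
    ext p
    simp only [mem_filter, mem_univ, true_and, mem_insert, Fin.ext_iff]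
    omega
  rw [sfun, hins, sum_insert (by simp), sfun, add_comm]

lemma sfun_prefix_inv {n m : ℕ} (σ : Fin n → Bool) (e : Equiv.Perm (Fin n))
    (he : ∀ p : Fin n, (p : ℕ) < m → e p = p) :
    sfun n m (σ ∘ e) = sfun n m σ := by
  refine Finset.sum_congr rfl fun p hp => ?_
  have := he p (by simpa using hp)
  simp [Function.comp, this]

lemma swap_sum {n i : ℕ} (hi1 : 1 ≤ i) (hi : i ≤ n) (j : Fin n) (hj : i - 1 ≤ (j : ℕ)) :
    ∑ σ ∈ Sset n, |sfun n (i - 1) σ + (if σ j then (1 : ℝ) else -1)|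
      = ∑ σ ∈ Sset n, |sfun n i σ| := by
  have han : i - 1 < n := by omega
  set a : Fin n := ⟨i - 1, han⟩ with ha
  refine Finset.sum_nbij' (fun σ => σ ∘ Equiv.swap a j) (fun σ => σ ∘ Equiv.swap a j)
    (fun σ _ => by rwa [mem_Sset_comp]) (fun σ _ => by rwa [mem_Sset_comp]) ?_ ?_ ?_
  · intro σ _; funext p; simp [Function.comp, Equiv.swap_apply_self]
  · intro σ _; funext p; simp [Function.comp, Equiv.swap_apply_self]
  · intro σ _
    have hstep := sfun_step hi1 hi (σ ∘ Equiv.swap a j)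
    have hpre : sfun n (i - 1) (σ ∘ Equiv.swap a j) = sfun n (i - 1) σ := by
      refine sfun_prefix_inv σ _ fun p hp => ?_
      refine Equiv.swap_apply_of_ne_of_ne ?_ ?_
      · intro h; rw [h] at hp; simp [ha] at hp
      · intro h; rw [h] at hp; omega
    have haj : (σ ∘ Equiv.swap a j) ⟨i - 1, by omega⟩ = σ j := by
      have : (⟨i - 1, by omega⟩ : Fin n) = a := rfl
      simp [this, Function.comp, Equiv.swap_apply_left]
    rw [hstep, hpre, haj]

lemma pointwise {n i : ℕ} (hn : Even n) (hi1 : 1 ≤ i) (hi : i ≤ n) (σ : Fin n → Bool)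
    (hσ : σ ∈ Sset n) :
    ∑ j ∈ univ.filter (fun p : Fin n => ¬((p : ℕ) < i - 1)),
        |sfun n (i - 1) σ + (if σ j then (1 : ℝ) else -1)|
      = ((n : ℝ) - i) * |sfun n (i - 1) σ|
        + ((n : ℝ) - i + 1) * (if sfun n (i - 1) σ = 0 then 1 else 0) := by
  set p : ℝ := sfun n (i - 1) σ with hp
  set P : Finset (Fin n) := univ.filter (fun q : Fin n => (q : ℕ) < i - 1) with hP
  set Q : Finset (Fin n) := univ.filter (fun q : Fin n => ¬((q : ℕ) < i - 1)) with hQ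
  set T : ℕ := (P.filter (fun q => σ q = true)).card with hT
  set F : ℕ := (P.filter (fun q => ¬(σ q = true))).card with hF
  set A : ℕ := (Q.filter (fun q => σ q = true)).card with hA
  set B : ℕ := (Q.filter (fun q => ¬(σ q = true))).card with hB
  -- p = T - F
  have hpTF : p = (T : ℝ) - F := sum_pm P σ
  -- split the sum
  have hsplit : ∑ j ∈ Q, |p + (if σ j then (1 : ℝ) else -1)|
      = (A : ℝ) * |p + 1| + (B : ℝ) * |p - 1| := by
    have e1 : ∑ q ∈ Q.filter (fun j => σ j = true), |p + (if σ q then (1 : ℝ) else -1)|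
        = (A : ℝ) * |p + 1| := by
      rw [Finset.sum_congr rfl (g := fun _ => |p + 1|)
        (fun q hq => by rw [if_pos (mem_filter.mp hq).2]), sum_const, nsmul_eq_mul]
    have e2 : ∑ q ∈ Q.filter (fun j => ¬(σ j = true)), |p + (if σ q then (1 : ℝ) else -1)|
        = (B : ℝ) * |p - 1| := by
      rw [Finset.sum_congr rfl (g := fun _ => |p - 1|)
        (fun q hq => by rw [if_neg (mem_filter.mp hq).2]; ring_nf), sum_const, nsmul_eq_mul]
    rw [← Finset.sum_filter_add_sum_filter_not Q (fun j => σ j = true), e1, e2]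
  -- counting facts
  have hcard_univ : (univ : Finset (Fin n)).card = n := by simp
  have htrue : (univ.filter (fun q : Fin n => σ q = true)).card = n / 2 := by
    have := hσ; simp only [Sset, mem_filter, mem_univ, true_and] at this; exact this
  have hfalse : (univ.filter (fun q : Fin n => ¬(σ q = true))).card = n / 2 := by
    have h1 := Finset.card_filter_add_card_filter_not
      (s := (univ : Finset (Fin n))) (p := fun q => σ q = true)
    rw [htrue, hcard_univ] at h1
    obtain ⟨m, hm⟩ := hn
    omega
  have hTA : T + A = n / 2 := by
    have h1 := Finset.card_filter_add_card_filter_not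
      (s := univ.filter (fun q : Fin n => σ q = true)) (p := fun q : Fin n => (q : ℕ) < i - 1)
    rw [htrue] at h1
    rw [hT, hA, hP, hQ, Finset.filter_comm, Finset.filter_comm
      (fun q : Fin n => ¬((q : ℕ) < i - 1))]
    exact h1
  have hFB : F + B = n / 2 := by
    have h1 := Finset.card_filter_add_card_filter_not
      (s := univ.filter (fun q : Fin n => ¬(σ q = true))) (p := fun q : Fin n => (q : ℕ) < i - 1)
    rw [hfalse] at h1
    rw [hF, hB, hP, hQ, Finset.filter_comm, Finset.filter_comm
      (fun q : Fin n => ¬((q : ℕ) < i - 1))]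
    exact h1
  have hQcard : Q.card = n - (i - 1) := by
    rw [hQ]
    have h1 : ((univ : Finset (Fin n)).filter (fun q : Fin n => (q : ℕ) < i - 1)).card
        + ((univ : Finset (Fin n)).filter (fun q : Fin n => ¬((q : ℕ) < i - 1))).card
        = (univ : Finset (Fin n)).card :=
      Finset.card_filter_add_card_filter_not (p := fun q : Fin n => (q : ℕ) < i - 1)
    rw [hcard_univ] at h1
    rw [card_filter_lt_fin n (i - 1) (by omega)] at h1
    omega
  have hABn : A + B = n - (i - 1) := by
    have h2 : A + B = Q.card := by
      rw [hA, hB]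
      exact Finset.card_filter_add_card_filter_not (p := fun q : Fin n => σ q = true)
    omega
  have hAB : (A : ℝ) + B = (n : ℝ) - i + 1 := by
    have h3 : ((A + B : ℕ) : ℝ) = ((n - (i - 1) : ℕ) : ℝ) := by rw [hABn]
    rw [Nat.cast_sub (by omega), Nat.cast_sub (by omega : (1 : ℕ) ≤ i)] at h3
    push_cast at h3 ⊢
    linarith
  have hABd : (A : ℝ) - B = (F : ℝ) - T := by
    have : A + T = F + B := by omega
    have h4 : ((A + T : ℕ) : ℝ) = ((F + B : ℕ) : ℝ) := by rw [this]
    push_cast at h4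
    linarith
  rw [hsplit]
  rcases lt_trichotomy T F with h | h | h
  · -- p ≤ -1
    have hple : p ≤ -1 := by
      rw [hpTF]
      have : (T : ℝ) + 1 ≤ F := by exact_mod_cast h
      linarith
    have h1 : |p + 1| = -(p + 1) := abs_of_nonpos (by linarith)
    have h2 : |p - 1| = -(p - 1) := abs_of_neg (by linarith)
    have h3 : |p| = -p := abs_of_neg (by linarith)
    rw [h1, h2, h3, if_neg (by intro h0; rw [h0] at hple; linarith)]
    linear_combination (-p) * hAB - hABd - hpTF
  · -- p = 0
    have hp0 : p = 0 := by rw [hpTF, h]; ring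
    have hABeq : A = B := by omega
    rw [hp0, if_pos rfl]
    rw [show |(0:ℝ) + 1| = 1 by norm_num, show |(0:ℝ) - 1| = 1 by norm_num]
    simp only [abs_zero]
    linarith [hAB]
  · -- p ≥ 1
    have hpge : 1 ≤ p := by
      rw [hpTF]
      have : (F : ℝ) + 1 ≤ T := by exact_mod_cast h
      linarith
    have h1 : |p + 1| = p + 1 := abs_of_pos (by linarith)
    have h2 : |p - 1| = p - 1 := abs_of_nonneg (by linarith)
    have h3 : |p| = p := abs_of_pos (by linarith)
    rw [h1, h2, h3, if_neg (by intro h0; rw [h0] at hpge; linarith)]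
    linear_combination p * hAB + hABd + hpTF



/-- E[|s_i|] = E[|s_{i−1}|]·(1 − 1/(n−i+1)) + P(s_{i−1} = 0). -/
theorem stmt_4 (n : ℕ) (hn : Even n) (hn0 : 0 < n) (i : ℕ) (hi1 : 1 ≤ i) (hi : i ≤ n) :
    let S : Finset (Fin n → Bool) :=
      univ.filter (fun σ => (univ.filter (fun p => σ p = true)).card = n / 2)
    let s : ℕ → (Fin n → Bool) → ℝ := fun j σ =>
      ∑ p ∈ univ.filter (fun p : Fin n => (p : ℕ) < j), (if σ p then (1 : ℝ) else -1)
    (∑ σ ∈ S, |s i σ|) / (S.card : ℝ)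
      = ((∑ σ ∈ S, |s (i - 1) σ|) / (S.card : ℝ)) * (1 - 1 / ((n : ℝ) - i + 1))
        + ((S.filter (fun σ => s (i - 1) σ = 0)).card : ℝ) / (S.card : ℝ) := by
  intro S s
  show (∑ σ ∈ Sset n, |sfun n i σ|) / ((Sset n).card : ℝ)
      = ((∑ σ ∈ Sset n, |sfun n (i - 1) σ|) / ((Sset n).card : ℝ)) * (1 - 1 / ((n : ℝ) - i + 1))
        + (((Sset n).filter (fun σ => sfun n (i - 1) σ = 0)).card : ℝ) / ((Sset n).card : ℝ)
  set Qf : Finset (Fin n) := univ.filter (fun q : Fin n => ¬((q : ℕ) < i - 1)) with hQf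
  -- cardinality of Qf
  have hQcard : Qf.card = n - (i - 1) := by
    rw [hQf]
    have h1 : ((univ : Finset (Fin n)).filter (fun q : Fin n => (q : ℕ) < i - 1)).card
        + ((univ : Finset (Fin n)).filter (fun q : Fin n => ¬((q : ℕ) < i - 1))).card
        = (univ : Finset (Fin n)).card :=
      Finset.card_filter_add_card_filter_not (p := fun q : Fin n => (q : ℕ) < i - 1)
    rw [card_univ, Fintype.card_fin, card_filter_lt_fin n (i - 1) (by omega)] at h1
    omega
  have hQcastm : ((Qf.card : ℕ) : ℝ) = (n : ℝ) - i + 1 := by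
    rw [hQcard, Nat.cast_sub (by omega), Nat.cast_sub (by omega : (1 : ℕ) ≤ i)]
    push_cast
    ring
  -- S is nonempty
  have hSne : (Sset n).Nonempty := by
    refine ⟨fun p => decide ((p : ℕ) < n / 2), ?_⟩
    simp only [Sset, mem_filter, mem_univ, true_and]
    have : (univ.filter (fun p : Fin n => decide ((p : ℕ) < n / 2) = true))
        = univ.filter (fun p : Fin n => (p : ℕ) < n / 2) := by
      ext q; simp
    rw [this, card_filter_lt_fin n (n / 2) (by omega)]
  have hc : (0 : ℝ) < ((Sset n).card : ℝ) := by
    exact_mod_cast Finset.card_pos.mpr hSne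
  have hm : (0 : ℝ) < (n : ℝ) - i + 1 := by
    have : (i : ℝ) ≤ n := by exact_mod_cast hi
    linarith
  -- double counting
  have hdouble : ∑ j ∈ Qf, ∑ σ ∈ Sset n, |sfun n (i - 1) σ + (if σ j then (1 : ℝ) else -1)|
      = (Qf.card : ℝ) * ∑ σ ∈ Sset n, |sfun n i σ| := by
    rw [Finset.sum_congr rfl (fun j hj => swap_sum hi1 hi j (by
      have := (mem_filter.mp hj).2; omega)), sum_const, nsmul_eq_mul]
  have hsum2 : ∑ σ ∈ Sset n, ∑ j ∈ Qf, |sfun n (i - 1) σ + (if σ j then (1 : ℝ) else -1)|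
      = ((n : ℝ) - i) * (∑ σ ∈ Sset n, |sfun n (i - 1) σ|)
        + ((n : ℝ) - i + 1) * (((Sset n).filter (fun σ => sfun n (i - 1) σ = 0)).card : ℝ) := by
    rw [Finset.sum_congr rfl (fun σ hσ => pointwise hn hi1 hi σ hσ)]
    rw [Finset.sum_add_distrib, ← Finset.mul_sum, ← Finset.mul_sum, Finset.sum_boole]
  have hkey : ((n : ℝ) - i + 1) * (∑ σ ∈ Sset n, |sfun n i σ|)
      = ((n : ℝ) - i) * (∑ σ ∈ Sset n, |sfun n (i - 1) σ|)
        + ((n : ℝ) - i + 1) * (((Sset n).filter (fun σ => sfun n (i - 1) σ = 0)).card : ℝ) := by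
    have h5 : ((Qf.card : ℕ) : ℝ) * (∑ σ ∈ Sset n, |sfun n i σ|)
        = ((n : ℝ) - i) * (∑ σ ∈ Sset n, |sfun n (i - 1) σ|)
          + ((n : ℝ) - i + 1) * (((Sset n).filter (fun σ => sfun n (i - 1) σ = 0)).card : ℝ) := by
      rw [← hdouble, Finset.sum_comm, hsum2]
    rwa [hQcastm] at h5
  set Av : ℝ := ∑ σ ∈ Sset n, |sfun n i σ|
  set Bv : ℝ := ∑ σ ∈ Sset n, |sfun n (i - 1) σ|
  set Nv : ℝ := (((Sset n).filter (fun σ => sfun n (i - 1) σ = 0)).card : ℝ)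
  set m : ℝ := (n : ℝ) - i + 1
  have hAv : Av = Bv * (1 - 1 / m) + Nv := by
    have hm0 : m ≠ 0 := ne_of_gt hm
    field_simp
    linear_combination hkey
  rw [hAv]
  ring
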